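/- Let B be an R-module that is a direct sum of submodules of countable rank, and A ≤ B a submodule that is also a direct sum of countable rank submodules. If B' is a direct summand of B such that A ∩ B' is a direct summand of A, then A + B' is a direct sum of submodules of countable rank. -/

import Mathlib

open Cardinal

universe u v

variable {R : Type u} [CommRing R] [IsDomain R]
variable {M : Type v} [AddCommGroup M] [Module R M]

/-- `A` is a relatively divisible (RD) submodule of `M`. -/
def IsRD (A : Submodule R M) : Prop :=
  ∀ (r : R) (m : M), r • m ∈ A → ∃ a ∈ A, r • a = r • m

/-- `A` is relatively divisible within the submodule `N` of `M`. -/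
def IsRDWithin (A N : Submodule R M) : Prop :=
  A ≤ N ∧ ∀ (r : R) (m : M), m ∈ N → r • m ∈ A → ∃ a ∈ A, r • a = r • m

/-- `A` is an RD*-submodule of `M`: RD, and every finite rank submodule of `M ⧸ A`
has a countable rank preimage. -/
def IsRDStar (A : Submodule R M) : Prop :=
  IsRD A ∧ ∀ Q : Submodule R (M ⧸ A), Module.rank R ↥Q < ℵ₀ →
    ∃ C : Submodule R M, Module.rank R ↥C ≤ ℵ₀ ∧ C.map A.mkQ = Q

/-- `A` is an RD*-submodule of the submodule `N` of `M`. -/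
def IsRDStarWithin (A N : Submodule R M) : Prop :=
  IsRDWithin A N ∧ ∀ Q : Submodule R (M ⧸ A), Q ≤ N.map A.mkQ →
    Module.rank R ↥Q < ℵ₀ →
    ∃ C : Submodule R M, C ≤ N ∧ Module.rank R ↥C ≤ ℵ₀ ∧ C.map A.mkQ = Q

/-- `A` is a direct summand of `M`. -/
def IsSummand (A : Submodule R M) : Prop :=
  ∃ P : Submodule R M, A ⊓ P = ⊥ ∧ A ⊔ P = ⊤

/-- `A` is a direct summand of the submodule `N` of `M`. -/
def IsSummandWithin (A N : Submodule R M) : Prop :=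
  A ≤ N ∧ ∃ P ≤ N, A ⊓ P = ⊥ ∧ A ⊔ P = N

/-- A G*(ℵ₀)-family of RD-submodules of `M`. -/
def IsGStarFamily (𝒢 : Set (Submodule R M)) : Prop :=
  (∀ A ∈ 𝒢, IsRD A) ∧ (⊥ : Submodule R M) ∈ 𝒢 ∧ (⊤ : Submodule R M) ∈ 𝒢 ∧
  (∀ c ⊆ 𝒢, IsChain (· ≤ ·) c → c.Nonempty → sSup c ∈ 𝒢) ∧
  ∀ C ∈ 𝒢, ∀ X : Set M, X.Countable →
    ∃ B ∈ 𝒢, C ≤ B ∧ X ⊆ ↑B ∧ Module.rank R ↥(B.map C.mkQ) ≤ ℵ₀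

/-- A G*(ℵ₀)-family of RD-submodules of the submodule `N` of `M`. -/
def IsGStarFamilyWithin (𝒢 : Set (Submodule R M)) (N : Submodule R M) : Prop :=
  (∀ A ∈ 𝒢, IsRDWithin A N) ∧ (⊥ : Submodule R M) ∈ 𝒢 ∧ N ∈ 𝒢 ∧
  (∀ c ⊆ 𝒢, IsChain (· ≤ ·) c → c.Nonempty → sSup c ∈ 𝒢) ∧
  ∀ C ∈ 𝒢, ∀ X : Set M, X ⊆ ↑N → X.Countable →
    ∃ B ∈ 𝒢, C ≤ B ∧ X ⊆ ↑B ∧ Module.rank R ↥(B.map C.mkQ) ≤ ℵ₀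

/-- `A` is ultra-balanced in `M`: an RD-submodule that is a direct summand of every
RD-submodule `C` of `M` containing `A` with `C/A` of finite rank. -/
def IsUltraBalanced (A : Submodule R M) : Prop :=
  IsRD A ∧ ∀ C : Submodule R M, IsRD C → A ≤ C →
    Module.rank R ↥(C.map A.mkQ) < ℵ₀ →
    ∃ D ≤ C, A ⊓ D = ⊥ ∧ A ⊔ D = C

/-- `N` is a direct sum of submodules of countable rank. -/
def DSumCountableRank (R : Type u) [CommRing R] (N : Type v) [AddCommGroup N]
    [Module R N] : Prop :=
  ∃ (ι : Type v) (f : ι → Submodule R N), iSupIndep f ∧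
    iSup f = ⊤ ∧ ∀ i, Module.rank R ↥(f i) ≤ ℵ₀

/-- `N` is finitely decomposable: a direct sum of finite rank submodules. -/
def FinDecomp (R : Type u) [CommRing R] (N : Type v) [AddCommGroup N]
    [Module R N] : Prop :=
  ∃ (ι : Type v) (f : ι → Submodule R N), iSupIndep f ∧
    iSup f = ⊤ ∧ ∀ i, Module.rank R ↥(f i) < ℵ₀

/-- The smallest RD-submodule of `M` containing `Y`. -/
def rdClosure (Y : Set M) : Submodule R M :=
  sInf {N : Submodule R M | IsRD N ∧ Y ⊆ ↑N}


set_option linter.unusedSectionVars false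

section AuxRank
variable {B : Type v} [AddCommGroup B] [Module R B]


lemma rank_le_aleph0_of_countable_cover (P : Submodule R B) {κ : Type*} [Countable κ]
    (X : κ → Submodule R B) (hX : ∀ k, Module.rank R (X k) ≤ ℵ₀)
    (hcov : ∀ x ∈ P, ∃ k, x ∈ X k) : Module.rank R P ≤ ℵ₀ := by
  rw [Module.rank_def]
  apply ciSup_le'
  rintro ⟨s, hs⟩
  have hsB : LinearIndependent R (fun x : s => ((x : ↥P) : B)) :=
    hs.map' P.subtype P.ker_subtype
  choose k hk using fun x : s => hcov _ (x : ↥P).2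
  have hfib : ∀ k₀ : κ, Countable {x : s // k x = k₀} := by
    intro k₀
    have hind : LinearIndependent R fun x : {x : s // k x = k₀} =>
        (⟨((x : s) : ↥P), by have := hk x.1; rwa [x.2] at this⟩ : ↥(X k₀)) := by
      apply LinearIndependent.of_comp (X k₀).subtype
      exact hsB.comp _ Subtype.val_injective
    exact Cardinal.mk_le_aleph0_iff.mp (hind.cardinal_le_rank.trans (hX k₀))
  have : Countable s := Countable.of_equiv _ (Equiv.sigmaFiberEquiv k)
  exact Cardinal.mk_le_aleph0

lemma mem_biSup_iff_exists_finset' {ι : Type*} {f : ι → Submodule R B} {J : Set ι} {x : B} :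
    x ∈ (⨆ i ∈ J, f i) ↔ ∃ F : Finset ι, ↑F ⊆ J ∧ x ∈ ⨆ i ∈ (F : Set ι), f i := by
  constructor
  · intro hx
    rw [iSup_subtype'] at hx
    obtain ⟨s, hs⟩ := Submodule.mem_iSup_iff_exists_finset.mp hx
    classical
    refine ⟨s.image Subtype.val, by simp, ?_⟩
    have hle : (⨆ j ∈ s, f (j : ι)) ≤ ⨆ i ∈ ((s.image Subtype.val : Finset ι) : Set ι), f i := by
      refine iSup₂_le fun j hj => ?_
      exact le_biSup f (Finset.mem_coe.mpr (Finset.mem_image_of_mem _ hj))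
    exact hle hs
  · rintro ⟨F, hFJ, hx⟩
    have hle := biSup_mono (f := f) (p := fun i => i ∈ (F : Set ι)) (q := fun i => i ∈ J)
      (fun i hi => hFJ hi)
    exact hle hx

lemma rank_biSup_le_aleph0 {ι : Type*} (f : ι → Submodule R B) {S : Set ι} (hS : S.Countable)
    (hf : ∀ i ∈ S, Module.rank R (f i) ≤ ℵ₀) :
    Module.rank R ↥(⨆ i ∈ S, f i) ≤ ℵ₀ := by
  classical
  have hfin : ∀ F : Finset ι, ↑F ⊆ S → Module.rank R ↥(⨆ i ∈ (F : Set ι), f i) ≤ ℵ₀ := by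
    intro F
    induction F using Finset.induction with
    | empty => intro _; rw [Finset.coe_empty, iSup_emptyset]; simp [rank_bot]
    | insert _ _ ha ih =>
      rename_i a F'
      intro hsub
      have h1 : (⨆ i ∈ ((insert a F' : Finset ι) : Set ι), f i)
          = f a ⊔ ⨆ i ∈ (F' : Set ι), f i := by
        rw [Finset.coe_insert, iSup_insert]
      rw [h1]
      refine (Submodule.rank_add_le_rank_add_rank _ _).trans ?_
      have h2 := ih (by intro y hy; exact hsub (by simp [hy]))
      have h3 : Module.rank R ↥(f a) ≤ ℵ₀ := hf a (hsub (by simp))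
      calc _ ≤ ℵ₀ + ℵ₀ := add_le_add h3 h2
        _ ≤ _ := by simp
  have hcount : Countable {F : Finset ι // ↑F ⊆ S} := by
    have h : Countable ↥{t : Set ι | t.Finite ∧ t ⊆ S} := by
      exact Set.countable_coe_iff.mpr (Set.countable_setOf_finite_subset hS)
    refine Function.Injective.countable
      (f := fun F : {F : Finset ι // ↑F ⊆ S} =>
        (⟨(F : Finset ι), (F : Finset ι).finite_toSet, F.2⟩ : ↥{t : Set ι | t.Finite ∧ t ⊆ S})) ?_
    rintro ⟨F₁, h₁⟩ ⟨F₂, h₂⟩ h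
    simp only [Subtype.mk.injEq] at h
    exact Subtype.ext (Finset.coe_injective h)
  apply rank_le_aleph0_of_countable_cover _
    (fun F : {F : Finset ι // ↑F ⊆ S} => ⨆ i ∈ ((F : Finset ι) : Set ι), f i)
  · intro k; exact hfin k k.2
  · intro x hx
    obtain ⟨F, hFS, hxF⟩ := mem_biSup_iff_exists_finset'.mp hx
    exact ⟨⟨F, hFS⟩, hxF⟩


section KapM
variable {ι : Type*} {f : ι → Submodule R B}

lemma kapDisjoint (hind : iSupIndep f) {J K : Set ι} (hJK : Disjoint J K) :
    Disjoint (⨆ i ∈ J, f i) (⨆ i ∈ K, f i) := by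
  rw [Submodule.disjoint_def]
  intro x hxJ hxK
  classical
  obtain ⟨F, hFJ, hxF⟩ := mem_biSup_iff_exists_finset'.mp hxJ
  clear hxJ
  induction F using Finset.induction generalizing x with
  | empty => simpa using hxF
  | insert _ _ ha ih =>
    rename_i a F'
    rw [Finset.coe_insert, iSup_insert] at hxF
    obtain ⟨y, hy, z, hz, hyz⟩ := Submodule.mem_sup.mp hxF
    have haK : a ∉ K ∪ (F' : Set ι) := by
      intro hmem
      rcases hmem with h | h
      · exact absurd (hFJ (by simp)) (fun hj => hJK.le_bot ⟨hj, h⟩ : a ∈ J → False)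
      · exact ha h
    have hy0 : y = 0 := by
      have h1 : y = x - z := by rw [← hyz]; abel
      have h2 : y ∈ ⨆ i ∈ K ∪ (F' : Set ι), f i := by
        rw [iSup_union]
        rw [h1]
        exact Submodule.sub_mem _ (le_sup_left (a := ⨆ i ∈ K, f i) hxK)
          (le_sup_right (b := ⨆ i ∈ (F' : Set ι), f i) hz)
      exact (hind.disjoint_biSup haK).le_bot ⟨hy, h2⟩ |>.symm ▸ rfl
    have hxz : x = z := by rw [← hyz, hy0, zero_add]
    rw [hxz]
    exact ih z (hxz ▸ hxK) (fun k hk => hFJ (by simp [hk])) hz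

lemma kapIsCompl (hind : iSupIndep f) (hsup : iSup f = ⊤) (J : Set ι) :
    IsCompl (⨆ i ∈ J, f i) (⨆ i ∈ Jᶜ, f i) := by
  constructor
  · exact kapDisjoint hind disjoint_compl_right
  · rw [codisjoint_iff, ← iSup_union, Set.union_compl_self, iSup_univ, hsup]

lemma kapPure [NoZeroSMulDivisors R B] (hind : iSupIndep f) (hsup : iSup f = ⊤) {J : Set ι}
    {a : R} (ha : a ≠ 0) {y : B} (h : a • y ∈ ⨆ i ∈ J, f i) : y ∈ ⨆ i ∈ J, f i := by
  have hy : y ∈ (⨆ i ∈ J, f i) ⊔ (⨆ i ∈ Jᶜ, f i) := by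
    rw [(kapIsCompl hind hsup J).codisjoint.eq_top]; trivial
  obtain ⟨u, hu, w, hw, huw⟩ := Submodule.mem_sup.mp hy
  have hav : a • w ∈ (⨆ i ∈ J, f i) ⊓ (⨆ i ∈ Jᶜ, f i) := by
    constructor
    · have : a • w = a • y - a • u := by rw [← huw]; rw [smul_add]; abel
      rw [this]
      exact Submodule.sub_mem _ h (Submodule.smul_mem _ _ hu)
    · exact Submodule.smul_mem _ _ hw
  rw [disjoint_iff.mp (kapIsCompl hind hsup J).disjoint] at hav
  have hw0 : w = 0 := by
    rcases (by simpa using hav : a = 0 ∨ w = 0) with h' | h'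
    · exact absurd h' ha
    · exact h'
  rw [← huw, hw0, add_zero]
  exact hu

end KapM

end AuxRank

lemma map_biSup_ne {B C : Type v} [AddCommGroup B] [Module R B] [AddCommGroup C] [Module R C]
    (e : B →ₗ[R] C) {ι : Type*} (f : ι → Submodule R B) (i : ι) :
    (⨆ (j) (_ : j ≠ i), (f j).map e) = Submodule.map e (⨆ (j) (_ : j ≠ i), f j) := by
  rw [Submodule.map_iSup]
  refine iSup_congr fun j => ?_
  rw [Submodule.map_iSup]

lemma DSumCountableRank.congr {M₁ N₁ : Type v} [AddCommGroup M₁] [Module R M₁]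
    [AddCommGroup N₁] [Module R N₁] (e : M₁ ≃ₗ[R] N₁) (h : DSumCountableRank R M₁) :
    DSumCountableRank R N₁ := by
  obtain ⟨ι, f, hind, hsup, hrank⟩ := h
  refine ⟨ι, fun i => (f i).map (e : M₁ →ₗ[R] N₁), ?_, ?_, ?_⟩
  · intro i
    show Disjoint ((f i).map (e : M₁ →ₗ[R] N₁)) (⨆ (j) (_ : j ≠ i), (f j).map (e : M₁ →ₗ[R] N₁))
    rw [disjoint_iff, map_biSup_ne]
    rw [← Submodule.map_inf (e : M₁ →ₗ[R] N₁) e.injective, disjoint_iff.mp (hind i),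
      Submodule.map_bot]
  · rw [← Submodule.map_iSup, hsup, Submodule.map_top, LinearEquiv.range]
  · intro i
    exact (LinearEquiv.rank_eq (Submodule.equivMapOfInjective _ e.injective (f i))).symm.le.trans
      (hrank i)

lemma dsumCountableRank_of_internal {B : Type v} [AddCommGroup B] [Module R B]
    (N : Submodule R B) (ι : Type v) (D : ι → Submodule R B) (hle : ∀ i, D i ≤ N)
    (hind : iSupIndep D) (hsup : (⨆ i, D i) = N)
    (hrank : ∀ i, Module.rank R (D i) ≤ ℵ₀) : DSumCountableRank R ↥N := by
  refine ⟨ι, fun i => (D i).comap N.subtype, ?_, ?_, ?_⟩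
  · intro i
    rw [Submodule.disjoint_def]
    intro x hx1 hx2
    have h2 : (x : B) ∈ ⨆ (j) (_ : j ≠ i), D j := by
      have hle2 : Submodule.map N.subtype (⨆ (j) (_ : j ≠ i), (D j).comap N.subtype)
          ≤ ⨆ (j) (_ : j ≠ i), D j := by
        rw [← map_biSup_ne]
        refine iSup₂_le fun j hj => ?_
        rw [Submodule.map_comap_subtype]
        exact inf_le_right.trans (le_iSup₂_of_le j hj le_rfl)
      exact hle2 ⟨x, hx2, rfl⟩
    have h1 : (x : B) ∈ D i := hx1
    have hb : (x : B) ∈ (⊥ : Submodule R B) :=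
      disjoint_iff.mp (hind i) ▸ Submodule.mem_inf.mpr ⟨h1, h2⟩
    exact Subtype.ext (by simpa using hb)
  · apply Submodule.map_injective_of_injective N.injective_subtype
    rw [Submodule.map_iSup]
    simp_rw [Submodule.map_comap_subtype]
    rw [Submodule.map_top, Submodule.range_subtype]
    refine le_antisymm (iSup_le fun i => inf_le_left) ?_
    conv_lhs => rw [← hsup]
    exact iSup_mono fun i => le_inf (hle i) le_rfl
  · intro i
    exact (Submodule.comapSubtypeEquivOfLe (hle i)).rank_eq.le.trans (hrank i)

lemma disj_aux {B : Type v} [AddCommGroup B] [Module R B]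
    (X Y : Submodule R B) (hdisj : X ⊓ Y = ⊥) {ι₁ : Type*} (g₁ : ι₁ → Submodule R ↥X)
    (hind₁ : iSupIndep g₁) (i₁ : ι₁) :
    Disjoint ((g₁ i₁).map X.subtype)
      ((⨆ (j) (_ : j ≠ i₁), (g₁ j).map X.subtype) ⊔ Y) := by
  rw [Submodule.disjoint_def]
  intro x hx1 hx2
  set U := ⨆ (j) (_ : j ≠ i₁), (g₁ j).map X.subtype with hU
  have hUX : U ≤ X := iSup₂_le fun j _ => Submodule.map_subtype_le _ _
  obtain ⟨u, hu, y, hy, huy⟩ := Submodule.mem_sup.mp hx2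
  have hxX : x ∈ X := Submodule.map_subtype_le _ _ hx1
  have hyX : y ∈ X := by
    have : y = x - u := by rw [← huy]; abel
    rw [this]; exact X.sub_mem hxX (hUX hu)
  have hy0 : y = 0 := by
    have : y ∈ X ⊓ Y := Submodule.mem_inf.mpr ⟨hyX, hy⟩
    rw [hdisj] at this; simpa using this
  have hxu : x = u := by rw [← huy, hy0, add_zero]
  have hbot : (g₁ i₁).map X.subtype ⊓ U = ⊥ := by
    rw [hU, map_biSup_ne, ← Submodule.map_inf _ X.injective_subtype,
      disjoint_iff.mp (hind₁ i₁), Submodule.map_bot]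
  have : x ∈ (⊥ : Submodule R B) := hbot ▸ Submodule.mem_inf.mpr ⟨hx1, hxu ▸ hu⟩
  simpa using this

lemma dsumCountableRank_sup {B : Type v} [AddCommGroup B] [Module R B]
    (X Y : Submodule R B) (hdisj : X ⊓ Y = ⊥)
    (hX : DSumCountableRank R ↥X) (hY : DSumCountableRank R ↥Y) :
    DSumCountableRank R ↥(X ⊔ Y) := by
  obtain ⟨ι₁, g₁, hind₁, hsup₁, hrank₁⟩ := hX
  obtain ⟨ι₂, g₂, hind₂, hsup₂, hrank₂⟩ := hY
  set DX : ι₁ → Submodule R B := fun i => (g₁ i).map X.subtype with hDX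
  set DY : ι₂ → Submodule R B := fun i => (g₂ i).map Y.subtype with hDY
  have hmapsup₁ : (⨆ i, DX i) = X := by
    rw [hDX, ← Submodule.map_iSup, hsup₁, Submodule.map_top, Submodule.range_subtype]
  have hmapsup₂ : (⨆ i, DY i) = Y := by
    rw [hDY, ← Submodule.map_iSup, hsup₂, Submodule.map_top, Submodule.range_subtype]
  have hDXle : ∀ i, DX i ≤ X := fun i => hmapsup₁ ▸ le_iSup DX i
  have hDYle : ∀ i, DY i ≤ Y := fun i => hmapsup₂ ▸ le_iSup DY i
  apply dsumCountableRank_of_internal (X ⊔ Y) (ι₁ ⊕ ι₂) (Sum.elim DX DY)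
  · rintro (i | i)
    · exact (hDXle i).trans le_sup_left
    · exact (hDYle i).trans le_sup_right
  · rintro (i | i)
    · refine Disjoint.mono_right ?_ (disj_aux X Y hdisj g₁ hind₁ i)
      refine iSup₂_le ?_
      rintro (j | j) hj
      · exact le_sup_left.trans' (le_iSup₂_of_le j (by simpa using hj) le_rfl)
      · exact le_sup_right.trans' ((hDYle j).trans le_rfl)
    · refine Disjoint.mono_right ?_ (disj_aux Y X (by rwa [inf_comm]) g₂ hind₂ i)
      refine iSup₂_le ?_
      rintro (j | j) hj
      · exact le_sup_right.trans' ((hDXle j).trans le_rfl)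
      · exact le_sup_left.trans' (le_iSup₂_of_le j (by simpa using hj) le_rfl)
  · rw [iSup_sum]
    simp only [Sum.elim_inl, Sum.elim_inr]
    rw [hmapsup₁, hmapsup₂]
  · rintro (i | i)
    · exact (LinearEquiv.rank_eq (Submodule.equivMapOfInjective _ X.injective_subtype
        (g₁ i))).symm.le.trans (hrank₁ i)
    · exact (LinearEquiv.rank_eq (Submodule.equivMapOfInjective _ Y.injective_subtype
        (g₂ i))).symm.le.trans (hrank₂ i)


theorem kaplansky_summand {B : Type v} [AddCommGroup B] [Module R B] [NoZeroSMulDivisors R B]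
    (hB : DSumCountableRank R B) (N N' : Submodule R B) (hc : IsCompl N N') :
    DSumCountableRank R ↥N := by
  classical
  obtain ⟨ι, f, hind, hsup, hrank⟩ := hB
  rcases isEmpty_or_nonempty ι with hι | hι
  · have htop : (⊤ : Submodule R B) = ⊥ := by rw [← hsup]; exact iSup_of_empty f
    have hsub : Subsingleton B := by
      constructor; intro x y
      have hx : x ∈ (⊥ : Submodule R B) := htop ▸ Submodule.mem_top
      have hy : y ∈ (⊥ : Submodule R B) := htop ▸ Submodule.mem_top
      simp only [Submodule.mem_bot] at hx hy
      rw [hx, hy]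
    have hNsub : Subsingleton (Submodule R ↥N) := by
      constructor; intro p q
      apply Submodule.ext; intro x
      have hx0 : x = 0 := Subtype.ext (Subsingleton.elim _ _)
      simp [hx0]
    exact ⟨PUnit, fun _ => ⊥, fun i => by simp, Subsingleton.elim _ _,
      fun i => by simp [rank_bot]⟩
  obtain ⟨lo, wflt⟩ := exists_wellOrder ι
  letI := lo
  haveI := wflt
  set p : B →ₗ[R] B := N.subtype ∘ₗ N.projectionOnto N' hc with hp
  have hpN : ∀ x : B, p x ∈ N := fun x => (N.projectionOnto N' hc x).2
  have hpfix : ∀ x ∈ N, p x = x := by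
    intro x hx
    show N.subtype (N.projectionOnto N' hc x) = x
    rw [show x = ((⟨x, hx⟩ : ↥N) : B) from rfl, Submodule.projectionOnto_apply_left hc]
    rfl
  have hTex : ∀ i : ι, ∃ T : Set B, (T ⊆ f i) ∧ T.Countable ∧
      ∀ x ∈ f i, ∃ a : R, a ≠ 0 ∧ a • x ∈ Submodule.span R T := by
    intro i
    obtain ⟨I, hI1, hI2⟩ := exists_maximal_linearIndepOn R (fun x : ↥(f i) => (x : B))
    refine ⟨(fun x : ↥(f i) => (x : B)) '' I, ?_, ?_, ?_⟩
    · rintro t ⟨x, hx, rfl⟩; exact x.2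
    · have hIind : LinearIndependent R (fun x : I => ((x : ↥(f i)))) :=
        LinearIndependent.of_comp (f i).subtype hI1
      have : Countable I := Cardinal.mk_le_aleph0_iff.mp
        (hIind.cardinal_le_rank.trans (hrank i))
      exact (Set.countable_coe_iff.mp this).image _
    · intro x hx
      by_cases hmem : (⟨x, hx⟩ : ↥(f i)) ∈ I
      · exact ⟨1, one_ne_zero, by
          rw [one_smul]; exact Submodule.subset_span ⟨⟨x, hx⟩, hmem, rfl⟩⟩
      · obtain ⟨a, ha, hspan⟩ := hI2 _ hmem
        exact ⟨a, ha, hspan⟩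
  choose T hT1 hT2 hT3 using hTex
  have hFex : ∀ x : B, ∃ F : Finset ι, x ∈ ⨆ i ∈ (F : Set ι), f i := by
    intro x
    have hx : x ∈ ⨆ i ∈ (Set.univ : Set ι), f i := by rw [iSup_univ, hsup]; trivial
    obtain ⟨F, _, hF⟩ := mem_biSup_iff_exists_finset'.mp hx
    exact ⟨F, hF⟩
  choose supF hsupF using hFex
  set σ : ι → Set ι := fun i =>
    {i} ∪ ⋃ t ∈ T i, ((supF (p t) : Set ι) ∪ (supF (t - p t) : Set ι)) with hσ
  have hσ_count : ∀ i, (σ i).Countable := by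
    intro i
    refine (Set.countable_singleton i).union ?_
    refine Set.Countable.biUnion (hT2 i) fun t _ => ?_
    exact ((supF (p t)).finite_toSet.countable).union ((supF (t - p t)).finite_toSet.countable)
  have hσ_p : ∀ i, ∀ t ∈ T i, p t ∈ ⨆ j ∈ σ i, f j := by
    intro i t ht
    refine biSup_mono (f := f) (p := fun j => j ∈ (supF (p t) : Set ι))
      (q := fun j => j ∈ σ i) ?_ (hsupF (p t))
    intro j hj
    exact Or.inr (Set.mem_biUnion ht (Or.inl hj))
  set Closed : Set ι → Prop := fun J => ∀ i ∈ J, σ i ⊆ J with hClosed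
  have hp_inv : ∀ J : Set ι, Closed J → ∀ x ∈ ⨆ i ∈ J, f i, p x ∈ ⨆ i ∈ J, f i := by
    intro J hJ x hx
    rw [iSup_subtype'] at hx
    refine Submodule.iSup_induction (motive := fun y => p y ∈ ⨆ i ∈ J, f i) _ hx ?_ (by simp) ?_
    · rintro ⟨i, hiJ⟩ y hy
      obtain ⟨a, ha, hspan⟩ := hT3 i y hy
      have h1 : p (a • y) ∈ Submodule.span R (p '' T i) := by
        rw [← Submodule.map_span]
        exact Submodule.mem_map_of_mem hspan
      have h2 : Submodule.span R (p '' T i) ≤ ⨆ j ∈ J, f j := by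
        rw [Submodule.span_le]
        rintro z ⟨t, ht, rfl⟩
        exact biSup_mono (f := f) (p := fun j => j ∈ σ i) (q := fun j => j ∈ J)
          (fun j hj => hJ i hiJ hj) (hσ_p i t ht)
      have h3 : a • p y ∈ ⨆ j ∈ J, f j := by rw [← map_smul]; exact h2 h1
      exact kapPure hind hsup ha h3
    · intro y z hy hz
      rw [map_add]; exact Submodule.add_mem _ hy hz
  set step : Set ι → Set ι := fun U => U ∪ ⋃ i ∈ U, σ i with hstep
  set cl : Set ι → Set ι := fun S => ⋃ n : ℕ, step^[n] S with hcl
  have hcl_sub : ∀ S, S ⊆ cl S := fun S => Set.subset_iUnion (fun n : ℕ => step^[n] S) 0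
  have hcl_closed : ∀ S, Closed (cl S) := by
    intro S i hi
    obtain ⟨U, ⟨n, rfl⟩, hiU⟩ := hi
    intro j hj
    refine Set.mem_iUnion.mpr ⟨n + 1, ?_⟩
    rw [Function.iterate_succ_apply']
    exact Or.inr (Set.mem_biUnion hiU hj)
  have hcl_count : ∀ S : Set ι, S.Countable → (cl S).Countable := by
    intro S hS
    refine Set.countable_iUnion (fun n => ?_)
    induction n with
    | zero => simpa using hS
    | succ n ih =>
      rw [Function.iterate_succ_apply']
      exact ih.union (Set.Countable.biUnion ih fun i _ => hσ_count i)
  set Jle : ι → Set ι := fun i => ⋃ j ∈ {j : ι | j ≤ i}, cl {j} with hJle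
  set Jlt : ι → Set ι := fun i => ⋃ j ∈ {j : ι | j < i}, cl {j} with hJlt
  have hUC : ∀ (s : Set ι) (g : ι → Set ι), (∀ j, Closed (g j)) → Closed (⋃ j ∈ s, g j) := by
    intro s g hg i hi
    simp only [Set.mem_iUnion] at hi
    obtain ⟨j, hjs, hij⟩ := hi
    exact (hg j i hij).trans (Set.subset_biUnion_of_mem hjs)
  have hJle_closed : ∀ i, Closed (Jle i) := fun i => hUC _ _ (fun j => hcl_closed {j})
  have hJlt_closed : ∀ i, Closed (Jlt i) := fun i => hUC _ _ (fun j => hcl_closed {j})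
  have hcl_le : ∀ {j i : ι}, j ≤ i → cl {j} ⊆ Jle i := fun {j i} hji =>
    Set.subset_biUnion_of_mem (u := fun k => cl {k}) (show j ∈ {k : ι | k ≤ i} from hji)
  have hcl_lt : ∀ {j i : ι}, j < i → cl {j} ⊆ Jlt i := fun {j i} hji =>
    Set.subset_biUnion_of_mem (u := fun k => cl {k}) (show j ∈ {k : ι | k < i} from hji)
  have hJlt_le : ∀ i, Jlt i ⊆ Jle i := by
    intro i k hk
    simp only [hJlt, Set.mem_iUnion] at hk
    obtain ⟨j, hj, hkj⟩ := hk
    exact hcl_le (le_of_lt hj) hkj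
  have hJle_lt : ∀ {j i : ι}, j < i → Jle j ⊆ Jlt i := by
    intro j i hji k hk
    simp only [hJle, Set.mem_iUnion] at hk
    obtain ⟨j', hj', hkj'⟩ := hk
    exact hcl_lt (lt_of_le_of_lt hj' hji) hkj'
  have hdiff : ∀ i, Jle i \ Jlt i ⊆ cl {i} := by
    intro i k hk
    obtain ⟨hk1, hk2⟩ := hk
    simp only [hJle, Set.mem_iUnion] at hk1
    obtain ⟨j, hji, hkj⟩ := hk1
    rcases lt_or_eq_of_le (hji : j ≤ i) with h | h
    · exact absurd (hcl_lt h hkj) hk2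
    · rwa [h] at hkj
  have hJle_eq : ∀ i, Jle i = Jlt i ∪ (Jle i \ Jlt i) := fun i =>
    (Set.union_diff_cancel (hJlt_le i)).symm
  -- submodules and projections
  have hCcompl : ∀ i, IsCompl (⨆ j ∈ Jlt i, f j) (⨆ j ∈ (Jlt i)ᶜ, f j) := fun i =>
    kapIsCompl hind hsup _
  set π : ι → (B →ₗ[R] B) := fun i =>
    p ∘ₗ ((⨆ j ∈ Jlt i, f j).subtype ∘ₗ
      Submodule.projectionOnto _ _ (hCcompl i)) with hπ
  have hπ_apply : ∀ i x, π i x =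
      p ((Submodule.projectionOnto _ _ (hCcompl i) x : ↥(⨆ j ∈ Jlt i, f j)) : B) :=
    fun i x => rfl
  have hπ_memN : ∀ i x, π i x ∈ N := fun i x => hpN _
  have hπ_memC : ∀ i x, π i x ∈ ⨆ j ∈ Jlt i, f j := by
    intro i x
    rw [hπ_apply]
    exact hp_inv (Jlt i) (hJlt_closed i) _
      (Submodule.projectionOnto _ _ (hCcompl i) x).2
  have hπ_fix : ∀ i, ∀ x ∈ (⨆ j ∈ Jlt i, f j) ⊓ N, π i x = x := by
    rintro i x hx
    obtain ⟨hx1, hx2⟩ := Submodule.mem_inf.mp hx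
    have h1 : Submodule.projectionOnto _ _ (hCcompl i) x = ⟨x, hx1⟩ := by
      conv_lhs => rw [show x = ((⟨x, hx1⟩ : ↥(⨆ j ∈ Jlt i, f j)) : B) from rfl]
      exact Submodule.projectionOnto_apply_left (hCcompl i) ⟨x, hx1⟩
    rw [hπ_apply, h1]
    exact hpfix x hx2
  set S : ι → Submodule R B := fun i => (⨆ j ∈ Jle i, f j) ⊓ N with hS
  set D : ι → Submodule R B := fun i => S i ⊓ LinearMap.ker (π i) with hD
  have hS'_le_S : ∀ i, (⨆ j ∈ Jlt i, f j) ⊓ N ≤ S i := fun i =>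
    inf_le_inf_right N (biSup_mono (fun j hj => hJlt_le i hj))
  have hD_le_S : ∀ i, D i ≤ S i := fun i => inf_le_left
  have hD_le_N : ∀ i, D i ≤ N := fun i => (hD_le_S i).trans inf_le_right
  have hπ_S' : ∀ i x, π i x ∈ (⨆ j ∈ Jlt i, f j) ⊓ N := fun i x =>
    Submodule.mem_inf.mpr ⟨hπ_memC i x, hπ_memN i x⟩
  have hdecomp : ∀ i, ∀ x ∈ S i, x - π i x ∈ D i := by
    intro i x hx
    refine Submodule.mem_inf.mpr ⟨Submodule.sub_mem _ hx (hS'_le_S i (hπ_S' i x)), ?_⟩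
    rw [LinearMap.mem_ker, map_sub, hπ_fix i _ (hπ_S' i x), sub_self]
  have hD_disj_C : ∀ i, D i ⊓ (⨆ j ∈ Jlt i, f j) = ⊥ := by
    intro i
    rw [Submodule.eq_bot_iff]
    intro x hx
    obtain ⟨hxD, hxC⟩ := Submodule.mem_inf.mp hx
    obtain ⟨hxS, hxker⟩ := Submodule.mem_inf.mp hxD
    have h1 : π i x = x := hπ_fix i x (Submodule.mem_inf.mpr
      ⟨hxC, (Submodule.mem_inf.mp hxS).2⟩)
    rw [← h1]
    exact hxker
  have hrankD : ∀ i, Module.rank R (D i) ≤ ℵ₀ := by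
    intro i
    have hEcnt : (Jle i \ Jlt i).Countable :=
      (hcl_count {i} (Set.countable_singleton i)).mono (hdiff i)
    set ρ : B →ₗ[R] B := (⨆ j ∈ (Jlt i)ᶜ, f j).subtype ∘ₗ
      Submodule.projectionOnto _ _ (hCcompl i).symm with hρ
    have hρ_ker : LinearMap.ker ρ = ⨆ j ∈ Jlt i, f j := by
      rw [hρ, LinearMap.ker_comp, Submodule.ker_subtype, Submodule.comap_bot,
        Submodule.ker_projectionOnto]
    have hρ_fixE : ∀ w ∈ (⨆ j ∈ Jle i \ Jlt i, f j), ρ w = w := by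
      intro w hw
      have hwc : w ∈ ⨆ j ∈ (Jlt i)ᶜ, f j := by
        refine biSup_mono (f := f) (p := fun k => k ∈ Jle i \ Jlt i)
          (q := fun k => k ∈ (Jlt i)ᶜ) (fun k hk => hk.2) hw
      show (⨆ j ∈ (Jlt i)ᶜ, f j).subtype
        (Submodule.projectionOnto _ _ (hCcompl i).symm w) = w
      conv_lhs => rw [show w = ((⟨w, hwc⟩ : ↥(⨆ j ∈ (Jlt i)ᶜ, f j)) : B) from rfl]
      rw [Submodule.projectionOnto_apply_left (hCcompl i).symm ⟨w, hwc⟩]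
      rfl
    have hρ_S : ∀ x ∈ (⨆ j ∈ Jle i, f j), ρ x ∈ ⨆ j ∈ Jle i \ Jlt i, f j := by
      intro x hx
      have hx2 : x ∈ (⨆ j ∈ Jlt i, f j) ⊔ (⨆ j ∈ Jle i \ Jlt i, f j) := by
        rw [← iSup_union, ← hJle_eq i]
        exact hx
      obtain ⟨u, hu, w, hw, huw⟩ := Submodule.mem_sup.mp hx2
      have hρu : ρ u = 0 := by rw [← LinearMap.mem_ker, hρ_ker]; exact hu
      have : ρ x = w := by rw [← huw, map_add, hρu, zero_add, hρ_fixE w hw]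
      rw [this]; exact hw
    set φ : ↥(D i) →ₗ[R] ↥(⨆ j ∈ Jle i \ Jlt i, f j) :=
      LinearMap.codRestrict _ (ρ ∘ₗ (D i).subtype)
        (fun x => hρ_S _ ((Submodule.mem_inf.mp ((hD_le_S i) x.2)).1)) with hφ
    have hφ_inj : Function.Injective φ := by
      rw [← LinearMap.ker_eq_bot, Submodule.eq_bot_iff]
      intro x hx
      rw [LinearMap.mem_ker] at hx
      have h0 : ρ (x : B) = 0 := congrArg Subtype.val hx
      have h1 : (x : B) ∈ ⨆ j ∈ Jlt i, f j := by rw [← hρ_ker]; exact h0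
      have h2 : (x : B) ∈ D i ⊓ (⨆ j ∈ Jlt i, f j) := Submodule.mem_inf.mpr ⟨x.2, h1⟩
      rw [hD_disj_C i] at h2
      exact Subtype.ext (by simpa using h2)
    have h3 : Module.rank R (D i) ≤ Module.rank R ↥(⨆ j ∈ Jle i \ Jlt i, f j) := by
      rw [(LinearEquiv.ofInjective φ hφ_inj).rank_eq]
      exact Submodule.rank_le _
    exact h3.trans (rank_biSup_le_aleph0 f hEcnt (fun j _ => hrank j))
  have hmemS : ∀ x ∈ N, ∃ i, x ∈ S i := by
    intro x hx
    rcases (supF x).eq_empty_or_nonempty with he | hne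
    · have hx0 : x = 0 := by
        have := hsupF x
        rw [he] at this
        simpa using this
      obtain ⟨i⟩ := hι
      exact ⟨i, hx0 ▸ Submodule.zero_mem _⟩
    · refine ⟨(supF x).max' hne, Submodule.mem_inf.mpr ⟨?_, hx⟩⟩
      refine biSup_mono (f := f) (p := fun k => k ∈ ((supF x) : Set ι))
        (q := fun k => k ∈ Jle ((supF x).max' hne)) ?_ (hsupF x)
      intro k hk
      exact hcl_le ((supF x).le_max' k hk) (hcl_sub {k} rfl)
  have hS'step : ∀ i, ∀ x ∈ (⨆ j ∈ Jlt i, f j) ⊓ N, x = 0 ∨ ∃ j, j < i ∧ x ∈ S j := by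
    intro i x hx
    obtain ⟨hx1, hx2⟩ := Submodule.mem_inf.mp hx
    obtain ⟨F, hFsub, hxF⟩ := mem_biSup_iff_exists_finset'.mp hx1
    rcases F.eq_empty_or_nonempty with he | hne
    · left; rw [he] at hxF; simpa using hxF
    · right
      have hch : ∀ k : {k // k ∈ F}, ∃ j, j < i ∧ (k : ι) ∈ cl {j} := by
        intro k
        have hkk := hFsub (Finset.mem_coe.mpr k.2)
        simp only [hJlt, Set.mem_iUnion] at hkk
        obtain ⟨j, hj, hkj⟩ := hkk
        exact ⟨j, hj, hkj⟩
      choose jf hjf1 hjf2 using hch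
      have hGne : (F.attach.image jf).Nonempty := (Finset.attach_nonempty_iff.mpr hne).image _
      set j₀ := (F.attach.image jf).max' hGne with hj₀
      have hj₀i : j₀ < i := by
        have hmem := (F.attach.image jf).max'_mem hGne
        simp only [Finset.mem_image] at hmem
        obtain ⟨k, _, hk⟩ := hmem
        rw [hj₀, ← hk]
        exact hjf1 k
      refine ⟨j₀, hj₀i, Submodule.mem_inf.mpr ⟨?_, hx2⟩⟩
      refine biSup_mono (f := f) (p := fun k => k ∈ (F : Set ι))
        (q := fun k => k ∈ Jle j₀) ?_ hxF
      intro k hk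
      have hkF : k ∈ F := Finset.mem_coe.mp hk
      have hle : jf ⟨k, hkF⟩ ≤ j₀ :=
        (F.attach.image jf).le_max' _ (Finset.mem_image_of_mem jf (F.mem_attach ⟨k, hkF⟩))
      exact hcl_le hle (hjf2 ⟨k, hkF⟩)
  have hSsub : ∀ i : ι, S i ≤ ⨆ j, D j := by
    intro i
    induction i using WellFoundedLT.induction with
    | ind i IH =>
      intro x hx
      have h1 : x - π i x ∈ ⨆ j, D j := le_iSup D i (hdecomp i x hx)
      have h2 : π i x ∈ ⨆ j, D j := by
        rcases hS'step i _ (hπ_S' i x) with h | ⟨j, hji, hmem⟩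
        · rw [h]; exact Submodule.zero_mem _
        · exact IH j hji hmem
      have h3 : x = π i x + (x - π i x) := by abel
      rw [h3]; exact Submodule.add_mem _ h2 h1
  have hDsup : (⨆ j, D j) = N := by
    apply le_antisymm
    · exact iSup_le fun i => hD_le_N i
    · intro x hx
      obtain ⟨i, hi⟩ := hmemS x hx
      exact hSsub i hi
  have hind_D : iSupIndep D := by
    intro i
    rw [Submodule.disjoint_def]
    intro x hxD hxO
    have hglobal : ∀ G : Finset ι, i ∉ G → ∀ y ∈ D i,
        y ∈ (⨆ j ∈ (G : Set ι), D j) → y = 0 := by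
      intro G
      induction G using Finset.strongInduction with
      | _ G IH =>
        intro hiG y hyD hyG
        rcases G.eq_empty_or_nonempty with he | hne
        · rw [he] at hyG; simpa using hyG
        · have him : i ≠ G.max' hne := fun h => hiG (h ▸ G.max'_mem hne)
          set m := G.max' hne with hm
          rcases lt_or_gt_of_ne him with hlt | hgt
          · -- i < m : project with π m
            have hyfix : π m y = y := by
              apply hπ_fix m
              refine Submodule.mem_inf.mpr ⟨?_, hD_le_N i hyD⟩
              have hyJ : y ∈ ⨆ j ∈ Jle i, f j := (Submodule.mem_inf.mp (hD_le_S i hyD)).1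
              exact biSup_mono (f := f) (p := fun k => k ∈ Jle i)
                (q := fun k => k ∈ Jlt m) (fun k hk => hJle_lt hlt hk) hyJ
            have hGsplit : y ∈ D m ⊔ ⨆ j ∈ ((G.erase m : Finset ι) : Set ι), D j := by
              have hGi : (G : Set ι) = insert m ((G.erase m : Finset ι) : Set ι) := by
                rw [← Finset.coe_insert, Finset.insert_erase (G.max'_mem hne)]
              rw [hGi, iSup_insert] at hyG
              exact hyG
            obtain ⟨d, hd, z, hz, hdz⟩ := Submodule.mem_sup.mp hGsplit
            have hπd : π m d = 0 := (Submodule.mem_inf.mp hd).2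
            have hrest_le : (⨆ j ∈ ((G.erase m : Finset ι) : Set ι), D j)
                ≤ (⨆ j ∈ Jlt m, f j) ⊓ N := by
              refine iSup₂_le fun j hj => ?_
              have hjF : j ∈ G.erase m := Finset.mem_coe.mp hj
              have hjm : j < m := lt_of_le_of_ne
                (G.le_max' j (Finset.mem_of_mem_erase hjF)) (Finset.ne_of_mem_erase hjF)
              refine le_inf ?_ (hD_le_N j)
              exact ((hD_le_S j).trans inf_le_left).trans
                (biSup_mono (fun k hk => hJle_lt hjm hk))
            have hπz : π m z = z := hπ_fix m z (hrest_le hz)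
            have hyz : y = z := by
              rw [← hyfix, ← hdz, map_add, hπd, zero_add, hπz]
            rw [hyz]
            refine IH (G.erase m) (Finset.erase_ssubset (G.max'_mem hne))
              (fun h => hiG (Finset.mem_of_mem_erase h)) z (hyz ▸ hyD) hz
          · -- all j ∈ G below i
            have hle2 : (⨆ j ∈ (G : Set ι), D j) ≤ ⨆ j ∈ Jlt i, f j := by
              refine iSup₂_le fun j hj => ?_
              have hji : j < i := lt_of_le_of_lt (G.le_max' j (Finset.mem_coe.mp hj)) hgt
              exact ((hD_le_S j).trans inf_le_left).trans
                (biSup_mono (fun k hk => hJle_lt hji hk))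
            have hmemb : y ∈ D i ⊓ (⨆ j ∈ Jlt i, f j) :=
              Submodule.mem_inf.mpr ⟨hyD, hle2 hyG⟩
            rw [hD_disj_C i] at hmemb
            simpa using hmemb
    rw [iSup_subtype'] at hxO
    obtain ⟨s, hs⟩ := Submodule.mem_iSup_iff_exists_finset.mp hxO
    have hxG : x ∈ ⨆ j ∈ ((s.image Subtype.val : Finset ι) : Set ι), D j := by
      have hle3 : (⨆ j ∈ s, D (j : ι)) ≤ ⨆ j ∈ ((s.image Subtype.val : Finset ι) : Set ι), D j :=
        iSup₂_le fun j hj => le_biSup D (Finset.mem_coe.mpr (Finset.mem_image_of_mem _ hj))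
      exact hle3 hs
    have hiG : i ∉ s.image Subtype.val := by
      intro hmem
      simp only [Finset.mem_image] at hmem
      obtain ⟨j, _, hj⟩ := hmem
      exact j.2 hj
    exact hglobal _ hiG x hxD hxG
  exact dsumCountableRank_of_internal N ι D hD_le_N hind_D hDsup hrankD


/-- If `B` and `A ≤ B` are direct sums of countable rank submodules, `B'` is a
summand of `B` and `A ⊓ B'` is a summand of `A`, then `A + B'` is a direct sum of countable
rank submodules. -/
theorem sum_dSumCountableRank {B : Type v} [AddCommGroup B] [Module R B]
    [NoZeroSMulDivisors R B] (A B' : Submodule R B)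
    (hB : DSumCountableRank R B) (hA : DSumCountableRank R ↥A)
    (hB' : IsSummand B') (hAB' : IsSummandWithin (A ⊓ B') A) :
    DSumCountableRank R ↥(A ⊔ B') := by
  obtain ⟨Q, hQ1, hQ2⟩ := hB'
  have hcB' : IsCompl B' Q := ⟨disjoint_iff.mpr hQ1, codisjoint_iff.mpr hQ2⟩
  have hB'd : DSumCountableRank R ↥B' := kaplansky_summand hB B' Q hcB'
  obtain ⟨hle, P, hPA, hinf, hsupP⟩ := hAB'
  set P₁ := P.comap A.subtype with hP₁
  set Q₁ := (A ⊓ B').comap A.subtype with hQ₁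
  have hcompl₁ : IsCompl P₁ Q₁ := by
    constructor
    · rw [disjoint_iff, hP₁, hQ₁, ← Submodule.comap_inf]
      have h0 : P ⊓ (A ⊓ B') = ⊥ := by rw [inf_comm]; exact hinf
      rw [h0, Submodule.comap_bot, Submodule.ker_subtype]
    · rw [codisjoint_iff]
      apply Submodule.map_injective_of_injective A.injective_subtype
      rw [Submodule.map_sup, hP₁, hQ₁, Submodule.map_comap_subtype,
        Submodule.map_comap_subtype, Submodule.map_top, Submodule.range_subtype]
      rw [inf_eq_right.mpr hPA, inf_eq_right.mpr (inf_le_left : A ⊓ B' ≤ A)]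
      rw [sup_comm]
      exact hsupP
  haveI : NoZeroSMulDivisors R ↥A :=
    Function.Injective.noZeroSMulDivisors _ A.injective_subtype rfl (fun _ _ => rfl)
  have hPd : DSumCountableRank R ↥P₁ := kaplansky_summand hA P₁ Q₁ hcompl₁
  have hPd' : DSumCountableRank R ↥P :=
    hPd.congr (Submodule.comapSubtypeEquivOfLe hPA)
  have hPB' : P ⊓ B' = ⊥ := by
    have h1 : P ⊓ B' = P ⊓ (A ⊓ B') := by
      rw [← inf_assoc, inf_eq_left.mpr hPA]
    rw [h1, inf_comm]
    exact hinf
  have hsup2 : P ⊔ B' = A ⊔ B' := by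
    calc P ⊔ B' = P ⊔ ((A ⊓ B') ⊔ B') := by
          rw [sup_eq_right.mpr (inf_le_right : A ⊓ B' ≤ B')]
      _ = ((A ⊓ B') ⊔ P) ⊔ B' := by rw [← sup_assoc, sup_comm P (A ⊓ B')]
      _ = A ⊔ B' := by rw [hsupP]
  have hfin := dsumCountableRank_sup P B' hPB' hPd' hB'd
  rwa [hsup2] at hfin
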